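/- arXiv:1206.2112 — 5 statements merged into one kernel-verified Lean document; each statement's English description precedes it below -/
import Mathlib

section
/- For complex ω with Im(ω) > 1 and complex η with Im(η) > 0, the two-dimensional Fourier transform ∫_{ℝ²} e^{iωx + iηy} · σ̄·√(T/y)·(e^x − K)⁺ · 1_{y>0} dx dy equals σ̄(1+i)·√(πT/(2η)) · K^{1+iω}/(iω − ω²). -/
open MeasureTheory Complex Set Filter Topology


lemma integrableOn_cexp_Ioi {c : ℂ} (hc : c.re < 0) (a : ℝ) :
    IntegrableOn (fun x : ℝ => Complex.exp (c * x)) (Set.Ioi a) := by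
  have h : IntegrableOn (fun x : ℝ => Real.exp (-(-c.re) * x)) (Set.Ioi a) :=
    exp_neg_integrableOn_Ioi a (by linarith : (0:ℝ) < -c.re)
  refine h.integrable.mono' ?_ ?_
  · exact (Complex.continuous_exp.comp (by continuity)).aestronglyMeasurable
  · filter_upwards with x
    simp [Complex.norm_exp, Complex.mul_re]

lemma integral_cexp_Ioi {c : ℂ} (hc : c.re < 0) (a : ℝ) :
    ∫ x in Set.Ioi a, Complex.exp (c * x) = -Complex.exp (c * a) / c := by
  have hc0 : c ≠ 0 := fun h => by simp [h] at hc
  have hd : ∀ x ∈ Set.Ici a, HasDerivAt (fun x : ℝ => Complex.exp (c * x) / c)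
      (Complex.exp (c * x)) x := by
    intro x _
    have h1 : HasDerivAt (fun x : ℝ => (c * x : ℂ)) c x := by
      simpa using (ofRealCLM.hasDerivAt.const_mul c)
    have h2 := h1.cexp
    have h3 := h2.div_const c
    simpa [mul_div_cancel_right₀ _ hc0] using h3
  have htends : Tendsto (fun x : ℝ => Complex.exp (c * x) / c) atTop (𝓝 0) := by
    rw [tendsto_zero_iff_norm_tendsto_zero]
    have h1 : Tendsto (fun x : ℝ => Real.exp (-(-c.re) * x) / ‖c‖) atTop (𝓝 0) := by
      have := (Real.tendsto_exp_neg_atTop_nhds_zero.comp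
        (tendsto_id.const_mul_atTop (by linarith : (0:ℝ) < -c.re))).div_const (‖c‖)
      simpa [Function.comp, neg_mul] using this
    refine h1.congr fun x => ?_
    simp only [norm_div, Complex.norm_exp, neg_neg]
    congr 2
    simp [Complex.mul_re]
  have := integral_Ioi_of_hasDerivAt_of_tendsto' hd (integrableOn_cexp_Ioi hc a) htends
  rw [this]; ring

lemma gauss_half {b : ℂ} (hb : 0 < b.re) :
    ∫ y in Set.Ioi (0:ℝ), Complex.exp (-b * y) * ((Real.sqrt y : ℝ) : ℂ)⁻¹ =
      ((Real.pi : ℂ) / b) ^ ((1:ℂ)/2) := by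
  have h := integral_comp_rpow_Ioi
    (fun y : ℝ => Complex.exp (-b * y) * ((Real.sqrt y : ℝ) : ℂ)⁻¹) (two_ne_zero (α := ℝ))
  rw [← h]
  have hcong : ∀ x ∈ Set.Ioi (0:ℝ),
      (|2| * x ^ ((2:ℝ) - 1)) • (Complex.exp (-b * (x ^ (2:ℝ) : ℝ)) *
        ((Real.sqrt (x ^ (2:ℝ)) : ℝ) : ℂ)⁻¹) = 2 * Complex.exp (-b * (x:ℂ) ^ 2) := by
    intro x hx
    have hx0 : 0 < x := hx
    rw [show (2:ℝ)-1 = 1 by norm_num, Real.rpow_one]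
    have h2 : (x : ℝ) ^ (2:ℝ) = x ^ 2 := by
      rw [show (2:ℝ) = ((2:ℕ):ℝ) by norm_num, Real.rpow_natCast]
    rw [h2, Real.sqrt_sq hx0.le]
    have hxne : ((x:ℝ):ℂ) ≠ 0 := by exact_mod_cast hx0.ne'
    push_cast
    rw [real_smul]
    push_cast
    field_simp
    ring
    norm_num
  rw [setIntegral_congr_fun measurableSet_Ioi hcong]
  rw [MeasureTheory.integral_const_mul, integral_gaussian_complex_Ioi hb]
  rw [show ((1:ℂ)/2) = (1/2 : ℂ) by norm_num]
  ring

lemma eq_of_sq_eq_sq' {z w : ℂ} (h : z ^ 2 = w ^ 2) (hz : 0 < z.re) (hw : 0 < w.re) : z = w := by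
  have h0 : (z - w) * (z + w) = 0 := by linear_combination h
  rcases mul_eq_zero.mp h0 with h1 | h1
  · exact sub_eq_zero.mp h1
  · exfalso
    have h2 : z = -w := eq_neg_of_add_eq_zero_left h1
    have := congrArg Complex.re h2
    simp only [Complex.neg_re] at this
    linarith

lemma re_half_pos {z : ℂ} (hz : z ≠ 0) (h : Complex.arg z ≠ Real.pi) :
    0 < (z ^ ((1:ℂ)/2)).re := by
  rw [Complex.cpow_def_of_ne_zero hz]
  have him : (Complex.log z * ((1:ℂ)/2)).im = Complex.arg z / 2 := by
    simp [Complex.mul_im, Complex.log_im]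
    ring
  rw [Complex.exp_re, him]
  apply mul_pos (Real.exp_pos _)
  apply Real.cos_pos_of_mem_Ioo
  have h1 := Complex.neg_pi_lt_arg z
  have h2 := lt_of_le_of_ne (Complex.arg_le_pi z) h
  constructor
  · linarith [Real.pi_pos]
  · linarith [Real.pi_pos]

lemma im_half_nonpos {z : ℂ} (hz : z ≠ 0) (h : Complex.arg z ≤ 0) :
    (z ^ ((1:ℂ)/2)).im ≤ 0 := by
  rw [Complex.cpow_def_of_ne_zero hz]
  have him : (Complex.log z * ((1:ℂ)/2)).im = Complex.arg z / 2 := by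
    simp [Complex.mul_im, Complex.log_im]
    ring
  rw [Complex.exp_im, him]
  have h1 := Complex.neg_pi_lt_arg z
  have hs : Real.sin (Complex.arg z / 2) ≤ 0 := by
    apply Real.sin_nonpos_of_nonpos_of_neg_pi_le <;> linarith [Real.pi_pos]
  exact mul_nonpos_of_nonneg_of_nonpos (Real.exp_pos _).le hs

lemma sq_half (z : ℂ) : (z ^ ((1:ℂ)/2)) ^ 2 = z := by
  have := Complex.cpow_nat_inv_pow z (two_ne_zero (α := ℕ))
  rw [show (((2:ℕ):ℂ))⁻¹ = (1:ℂ)/2 by norm_num] at this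
  exact_mod_cast this

lemma key_branch (T : ℝ) (hT : 0 < T) (η : ℂ) (hη : 0 < η.im) :
    ((Real.sqrt T : ℝ) : ℂ) * ((Real.pi : ℂ) / (-(I*η))) ^ ((1:ℂ)/2) =
      (1 + I) * ((Real.pi : ℂ) * (T:ℂ) / (2*η)) ^ ((1:ℂ)/2) := by
  have hη0 : η ≠ 0 := fun h => by simp [h] at hη
  have hπ : (0:ℝ) < Real.pi := Real.pi_pos
  have hb : (-(I*η)).re = η.im := by simp
  have hbne : -(I*η) ≠ 0 := by
    intro h; apply hη0; simpa using congrArg (fun z => I * z) (neg_eq_zero.mp h)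
  set z : ℂ := (Real.pi : ℂ) / (-(I*η)) with hzdef
  set w : ℂ := (Real.pi : ℂ) * (T:ℂ) / (2*η) with hwdef
  have hzne : z ≠ 0 := div_ne_zero (by exact_mod_cast hπ.ne') hbne
  have hwne : w ≠ 0 := div_ne_zero (mul_ne_zero (by exact_mod_cast hπ.ne') (by exact_mod_cast hT.ne')) (by simpa using hη0)
  have hns : 0 < Complex.normSq (-(I*η)) := Complex.normSq_pos.mpr hbne
  have hns2 : 0 < Complex.normSq ((2:ℂ)*η) := Complex.normSq_pos.mpr (by simpa using hη0)
  have hzre : 0 < z.re := by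
    have he : z.re = Real.pi * η.im / Complex.normSq (-(I*η)) := by
      rw [hzdef, Complex.div_re]; simp [hb]
    rw [he]; exact div_pos (mul_pos hπ hη) hns
  have hwim : w.im < 0 := by
    have he : w.im = -(Real.pi * T * (2 * η.im)) / Complex.normSq ((2:ℂ)*η) := by
      rw [hwdef, Complex.div_im]; simp; ring
    rw [he]
    apply div_neg_of_neg_of_pos _ hns2
    nlinarith [mul_pos (mul_pos hπ hT) hη]
  -- LHS and RHS as square roots
  have hzarg : Complex.arg z ≠ Real.pi := by
    intro h
    rcases Complex.arg_eq_pi_iff.mp h with ⟨h1, _⟩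
    linarith
  have hwarg_ne : Complex.arg w ≠ Real.pi := by
    intro h
    rcases Complex.arg_eq_pi_iff.mp h with ⟨_, h2⟩
    linarith
  have hwarg_le : Complex.arg w ≤ 0 := le_of_lt (Complex.arg_neg_iff.mpr hwim)
  have hLre : 0 < (((Real.sqrt T : ℝ) : ℂ) * z ^ ((1:ℂ)/2)).re := by
    rw [Complex.re_ofReal_mul]
    exact mul_pos (Real.sqrt_pos.mpr hT) (re_half_pos hzne hzarg)
  have hRre : 0 < ((1 + I) * w ^ ((1:ℂ)/2)).re := by
    have h1 := re_half_pos hwne hwarg_ne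
    have h2 := im_half_nonpos hwne hwarg_le
    simp only [Complex.mul_re, Complex.add_re, Complex.one_re, Complex.I_re,
      Complex.add_im, Complex.one_im, Complex.I_im]
    nlinarith
  refine eq_of_sq_eq_sq' ?_ hLre hRre
  rw [mul_pow, mul_pow, sq_half, sq_half]
  have hsqT : (((Real.sqrt T : ℝ) : ℂ)) ^ 2 = (T : ℂ) := by
    rw [← Complex.ofReal_pow, Real.sq_sqrt hT.le]
  rw [hsqT]
  have h1I : ((1:ℂ) + I) ^ 2 = 2 * I := by
    rw [add_sq]; simp [Complex.I_sq]
  rw [h1I, hzdef, hwdef]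
  field_simp
  ring_nf
  simp [Complex.I_sq]

/-- Fourier transform of the target volatility option payoff
`F(x,y) = σ̄ √(T/y) (eˣ − K)⁺ 1_{y>0}`. -/
theorem stmt0 (σbar T K : ℝ) (hσ : 0 < σbar) (hT : 0 < T) (hK : 0 < K)
    (ω η : ℂ) (hω : 1 < ω.im) (hη : 0 < η.im) :
    (∫ x : ℝ, ∫ y in Set.Ioi (0:ℝ),
        Complex.exp (I * ω * x + I * η * y) *
          ((σbar * Real.sqrt (T / y) * max (Real.exp x - K) 0 : ℝ) : ℂ)) =
      (σbar : ℂ) * (1 + I) * ((Real.pi : ℂ) * (T : ℂ) / (2 * η)) ^ ((1:ℂ)/2) *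
        (K : ℂ) ^ (1 + I * ω) / (I * ω - ω ^ 2) := by
  have hK0 : (K:ℂ) ≠ 0 := by exact_mod_cast hK.ne'
  have hbre : (0:ℝ) < (-(I*η)).re := by simpa using hη
  -- the y-integral
  have hA : ∫ y in Set.Ioi (0:ℝ), Complex.exp (I*η*y) * ((Real.sqrt (T/y) : ℝ) : ℂ) =
      ((Real.sqrt T : ℝ):ℂ) * ((Real.pi:ℂ)/(-(I*η))) ^ ((1:ℂ)/2) := by
    rw [← gauss_half hbre, ← MeasureTheory.integral_const_mul]
    apply setIntegral_congr_fun measurableSet_Ioi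
    intro y hy
    have hy0 : (0:ℝ) < y := hy
    simp only [neg_neg]
    rw [Real.sqrt_div hT.le, Complex.ofReal_div]
    ring
  -- the inner integral factorizes
  have hinner : ∀ x : ℝ, (∫ y in Set.Ioi (0:ℝ),
      Complex.exp (I*ω*x + I*η*y) * ((σbar * Real.sqrt (T/y) * max (Real.exp x - K) 0 : ℝ):ℂ)) =
      Complex.exp (I*ω*x) * ((max (Real.exp x - K) 0 : ℝ):ℂ) *
        ((σbar:ℂ) * (((Real.sqrt T : ℝ):ℂ) * ((Real.pi:ℂ)/(-(I*η))) ^ ((1:ℂ)/2))) := by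
    intro x
    have hpt : ∀ y:ℝ, Complex.exp (I*ω*x + I*η*y) *
        ((σbar * Real.sqrt (T/y) * max (Real.exp x - K) 0 : ℝ):ℂ) =
        (Complex.exp (I*ω*x) * ((max (Real.exp x - K) 0:ℝ):ℂ) * (σbar:ℂ)) *
          (Complex.exp (I*η*y) * ((Real.sqrt (T/y):ℝ):ℂ)) := by
      intro y; rw [Complex.exp_add]; push_cast; ring
    simp_rw [hpt]
    rw [MeasureTheory.integral_const_mul, hA]
    ring
  simp_rw [hinner]
  rw [MeasureTheory.integral_mul_const]
  -- the x-integral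
  have hre1 : ((I:ℂ)*ω).re < 0 := by simp [Complex.mul_re]; linarith
  have hre2 : ((1:ℂ) + I*ω).re < 0 := by simp [Complex.add_re, Complex.mul_re]; linarith
  have hne1 : (I:ℂ)*ω ≠ 0 := by intro h; rw [h] at hre1; simp at hre1
  have hne2 : (1:ℂ) + I*ω ≠ 0 := by intro h; rw [h] at hre2; simp at hre2
  have hd : I*ω - ω^2 = (I*ω) * (1 + I*ω) := by
    have hI : (I:ℂ)^2 = -1 := Complex.I_sq
    linear_combination (-ω^2) * hI
  have hdne : I*ω - ω^2 ≠ 0 := by rw [hd]; exact mul_ne_zero hne1 hne2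
  have hzero : ∀ x : ℝ, x ∉ Set.Ioi (Real.log K) →
      Complex.exp (I*ω*x) * ((max (Real.exp x - K) 0 : ℝ):ℂ) = 0 := by
    intro x hx
    have hx' : x ≤ Real.log K := not_lt.mp hx
    have : Real.exp x ≤ K := by
      rw [← Real.exp_log hK]; exact Real.exp_le_exp.mpr hx'
    rw [max_eq_right (by linarith : Real.exp x - K ≤ 0)]
    simp
  have hcong : ∀ x ∈ Set.Ioi (Real.log K),
      Complex.exp (I*ω*x) * ((max (Real.exp x - K) 0 : ℝ):ℂ) =
      Complex.exp ((1+I*ω)*x) - (K:ℂ) * Complex.exp ((I*ω)*x) := by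
    intro x hx
    have h1 : K < Real.exp x := by
      rw [← Real.exp_log hK]; exact Real.exp_lt_exp.mpr hx
    rw [max_eq_left (by linarith : (0:ℝ) ≤ Real.exp x - K)]
    push_cast
    rw [add_mul, one_mul, Complex.exp_add]
    ring
  have hB : (∫ x : ℝ, Complex.exp (I*ω*x) * ((max (Real.exp x - K) 0 : ℝ):ℂ)) =
      (K:ℂ) ^ (1 + I*ω) / (I*ω - ω^2) := by
    rw [← setIntegral_eq_integral_of_forall_compl_eq_zero hzero]
    rw [setIntegral_congr_fun measurableSet_Ioi hcong]
    rw [MeasureTheory.integral_sub (integrableOn_cexp_Ioi hre2 _)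
      ((integrableOn_cexp_Ioi hre1 _).const_mul _)]
    rw [MeasureTheory.integral_const_mul, integral_cexp_Ioi hre2, integral_cexp_Ioi hre1]
    have hcpow : ∀ s : ℂ, (K:ℂ) ^ s = Complex.exp (s * (Real.log K : ℂ)) := by
      intro s
      rw [Complex.cpow_def_of_ne_zero hK0, ← Complex.ofReal_log hK.le, mul_comm]
    rw [← hcpow (1+I*ω), ← hcpow (I*ω)]
    have hKpow : (K:ℂ) * (K:ℂ)^((I:ℂ)*ω) = (K:ℂ)^(1+I*ω) := by
      rw [Complex.cpow_add _ _ hK0, Complex.cpow_one]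
    rw [hd, ← hKpow]
    have hω0 : ω ≠ 0 := fun h => by simp [h] at hne1
    field_simp
    ring
  rw [hB, key_branch T hT η hη]
  ring
end

section
/- For complex ω with Im(ω) > 1 and complex η with Im(η) > 0, the two-dimensional Fourier transform ∫_{ℝ²} e^{iωx + iηy} · (e^x − K)⁺ · 1_{K₁ ≤ √(y/T) ≤ K₂} dx dy equals (e^{iηK₁²T} − e^{iηK₂²T}) · K^{1+iω} / ((ω + iω²)·η). -/
open MeasureTheory Complex Set Filter Topology

lemma aux_integrableOn_cexp_Ioi {c : ℂ} (hc : c.re < 0) (a : ℝ) :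
    IntegrableOn (fun x : ℝ => Complex.exp (c * x)) (Ioi a) := by
  have hbd : IntegrableOn (fun x : ℝ => Real.exp (c.re * x)) (Ioi a) := by
    simpa using exp_neg_integrableOn_Ioi a (show (0:ℝ) < -c.re by linarith)
  refine Integrable.mono' hbd ?_ ?_
  · exact (Complex.continuous_exp.comp
      (continuous_const.mul Complex.continuous_ofReal)).aestronglyMeasurable.restrict
  · filter_upwards with x
    simp [Complex.norm_exp, Complex.mul_re]

lemma aux_integral_cexp_Ioi {c : ℂ} (hc : c.re < 0) (a : ℝ) :
    ∫ x in Ioi a, Complex.exp (c * x) = -Complex.exp (c * a) / c := by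
  have hc0 : c ≠ 0 := fun h => by simp [h] at hc
  have hd : ∀ x ∈ Ici a,
      HasDerivAt (fun x : ℝ => Complex.exp (c * x) / c) (Complex.exp (c * x)) x := by
    intro x _
    have h0 : HasDerivAt (fun x : ℝ => c * (x : ℂ)) c x := by
      simpa using (Complex.ofRealCLM.hasDerivAt (x := x)).const_mul c
    have h1 : HasDerivAt (fun x : ℝ => Complex.exp (c * x)) (Complex.exp (c * x) * c) x :=
      h0.cexp
    have := h1.div_const c
    simpa [mul_div_assoc, mul_div_cancel_right₀ _ hc0] using this
  have ht : Tendsto (fun x : ℝ => Complex.exp (c * x) / c) atTop (𝓝 0) := by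
    rw [tendsto_zero_iff_norm_tendsto_zero]
    have heq : (fun x : ℝ => ‖Complex.exp (c * x) / c‖)
        = fun x : ℝ => Real.exp (c.re * x) / ‖c‖ := by
      funext x; simp [Complex.norm_exp, Complex.mul_re]
    rw [heq]
    have h2 : Tendsto (fun x : ℝ => Real.exp (c.re * x)) atTop (𝓝 0) :=
      Real.tendsto_exp_atBot.comp ((tendsto_const_mul_atBot_of_neg hc).mpr tendsto_id)
    simpa using h2.div_const ‖c‖
  have := integral_Ioi_of_hasDerivAt_of_tendsto' hd (aux_integrableOn_cexp_Ioi hc a) ht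
  rw [this]; ring

/-- Fourier transform of the volatility capped call payoff
`F(x,y) = (eˣ − K)⁺ 1_{K₁²T ≤ y ≤ K₂²T}`. -/
theorem stmt2 (K K₁ K₂ T : ℝ) (hK : 0 < K) (hT : 0 < T) (h1 : 0 < K₁) (h12 : K₁ < K₂)
    (ω η : ℂ) (hω : 1 < ω.im) (hη : 0 < η.im) :
    (∫ x : ℝ, ∫ y : ℝ,
        Complex.exp (I * ω * x + I * η * y) *
          ((max (Real.exp x - K) 0 : ℝ) : ℂ) *
          (if K₁ ^ 2 * T ≤ y ∧ y ≤ K₂ ^ 2 * T then (1:ℂ) else 0)) =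
      (Complex.exp (I * η * ((K₁ ^ 2 * T : ℝ) : ℂ)) -
          Complex.exp (I * η * ((K₂ ^ 2 * T : ℝ) : ℂ))) *
        (K : ℂ) ^ (1 + I * ω) / ((ω + I * ω ^ 2) * η) := by
  have hη0 : η ≠ 0 := fun h => by simp [h] at hη
  have hIη : I * η ≠ 0 := mul_ne_zero I_ne_zero hη0
  have hb : K₁ ^ 2 * T ≤ K₂ ^ 2 * T := by
    have h2 : K₁ ^ 2 ≤ K₂ ^ 2 := by nlinarith
    nlinarith
  set a : ℝ := Real.log K with ha
  have hc1 : (I * ω).re < 0 := by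
    simp only [Complex.mul_re, Complex.I_re, Complex.I_im, zero_mul, one_mul, zero_sub]
    linarith
  have hc2 : (I * ω + 1).re < 0 := by
    simp only [Complex.add_re, Complex.mul_re, Complex.I_re, Complex.I_im, Complex.one_re,
      zero_mul, one_mul, zero_sub]
    linarith
  have hc10 : I * ω ≠ 0 := fun h => by simp [h] at hc1
  have hc20 : I * ω + 1 ≠ 0 := fun h => by simp [h] at hc2
  -- inner integral
  have inner : ∀ x : ℝ, (∫ y : ℝ,
      Complex.exp (I * ω * x + I * η * y) * ((max (Real.exp x - K) 0 : ℝ) : ℂ) *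
        (if K₁ ^ 2 * T ≤ y ∧ y ≤ K₂ ^ 2 * T then (1:ℂ) else 0))
      = (Complex.exp (I * ω * x) * ((max (Real.exp x - K) 0 : ℝ) : ℂ)) *
        ((Complex.exp (I * η * ((K₂ ^ 2 * T : ℝ) : ℂ)) -
          Complex.exp (I * η * ((K₁ ^ 2 * T : ℝ) : ℂ))) / (I * η)) := by
    intro x
    have h1 : (fun y : ℝ =>
        Complex.exp (I * ω * x + I * η * y) * ((max (Real.exp x - K) 0 : ℝ) : ℂ) *
          (if K₁ ^ 2 * T ≤ y ∧ y ≤ K₂ ^ 2 * T then (1:ℂ) else 0))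
        = fun y : ℝ => (Complex.exp (I * ω * x) * ((max (Real.exp x - K) 0 : ℝ) : ℂ)) *
          Set.indicator (Set.Icc (K₁ ^ 2 * T) (K₂ ^ 2 * T))
            (fun y : ℝ => Complex.exp (I * η * y)) y := by
      funext y
      rw [Complex.exp_add]
      by_cases h : K₁ ^ 2 * T ≤ y ∧ y ≤ K₂ ^ 2 * T
      · rw [Set.indicator_of_mem (Set.mem_Icc.mpr h), if_pos h]; ring
      · rw [Set.indicator_of_notMem (by simpa [Set.mem_Icc] using h), if_neg h]; ring
    rw [h1, MeasureTheory.integral_const_mul, integral_indicator measurableSet_Icc,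
      integral_Icc_eq_integral_Ioc, ← intervalIntegral.integral_of_le hb,
      integral_exp_mul_complex hIη]
  simp only [inner]
  rw [MeasureTheory.integral_mul_const]
  -- outer integral
  have hJfun : (fun x : ℝ => Complex.exp (I * ω * x) * ((max (Real.exp x - K) 0 : ℝ) : ℂ))
      = Set.indicator (Ioi a)
        (fun x : ℝ => Complex.exp ((I * ω + 1) * x) - K * Complex.exp (I * ω * x)) := by
    funext x
    by_cases h : a < x
    · rw [Set.indicator_of_mem (Set.mem_Ioi.mpr h)]
      have hx : K < Real.exp x := by
        calc K = Real.exp a := (Real.exp_log hK).symm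
        _ < Real.exp x := Real.exp_lt_exp.mpr h
      have hmax : ((max (Real.exp x - K) 0 : ℝ) : ℂ) = Complex.exp x - K := by
        rw [max_eq_left (by linarith)]
        push_cast [Complex.ofReal_exp]
        ring
      rw [hmax, add_mul, one_mul, Complex.exp_add]
      ring
    · rw [Set.indicator_of_notMem (by simpa using h : x ∉ Ioi a)]
      have hx : Real.exp x ≤ K := by
        calc Real.exp x ≤ Real.exp a := Real.exp_le_exp.mpr (not_lt.mp h)
        _ = K := Real.exp_log hK
      rw [max_eq_right (by linarith)]
      simp
  rw [hJfun, integral_indicator measurableSet_Ioi,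
    MeasureTheory.integral_sub (aux_integrableOn_cexp_Ioi hc2 a)
      ((aux_integrableOn_cexp_Ioi hc1 a).const_mul K),
    MeasureTheory.integral_const_mul, aux_integral_cexp_Ioi hc2, aux_integral_cexp_Ioi hc1]
  -- algebraic finish
  have hEa : Complex.exp ((I * ω + 1) * a) = K * Complex.exp (I * ω * a) := by
    rw [add_mul, one_mul, Complex.exp_add]
    have : Complex.exp (a : ℂ) = (K : ℂ) := by
      rw [← Complex.ofReal_exp, ha, Real.exp_log hK]
    rw [this]; ring
  have hKpow : (K : ℂ) ^ (1 + I * ω) = K * Complex.exp (I * ω * a) := by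
    rw [Complex.cpow_def_of_ne_zero (by exact_mod_cast hK.ne'),
      ← Complex.ofReal_log hK.le, ← ha]
    rw [show (a : ℂ) * (1 + I * ω) = (a : ℂ) + I * ω * a by ring, Complex.exp_add]
    have : Complex.exp (a : ℂ) = (K : ℂ) := by
      rw [← Complex.ofReal_exp, ha, Real.exp_log hK]
    rw [this]
  have hden : ω + I * ω ^ 2 = -I * ((I * ω) * (I * ω + 1)) := by
    linear_combination (I * ω ^ 2 + ω) * Complex.I_sq
  have hden0 : ω + I * ω ^ 2 ≠ 0 := by
    rw [hden]
    exact mul_ne_zero (neg_ne_zero.mpr I_ne_zero) (mul_ne_zero hc10 hc20)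
  rw [hEa, hKpow, hden]
  field_simp [show ω ≠ 0 from right_ne_zero_of_mul hc10]
  ring
end

section
/- For the Heston variance process with drift α(x) = κ(θ − x) and diffusion β(x) = ε√x (κ, θ, ε > 0), the scale-measure integral p(x) = (2/ε²)∫₁^x u^{−2κθ/ε²} e^{(2κ/ε²)(u−1)} (∫₁^u z^{2κθ/ε²−1} e^{−(2κ/ε²)(z−1)} dz) du satisfies: p(x) → +∞ as x → +∞; and lim_{x→0⁺} p(x) is finite if and only if 2κθ < ε². -/
open Filter MeasureTheory Set intervalIntegral

noncomputable def fH (a b z : ℝ) : ℝ := z ^ (a-1) * Real.exp (-b * (z-1))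
noncomputable def gH (a b u : ℝ) : ℝ :=
  u ^ (-a) * Real.exp (b * (u-1)) * ∫ z in (1:ℝ)..u, fH a b z

variable {a b : ℝ}

lemma fH_nonneg (z : ℝ) (hz : 0 ≤ z) : 0 ≤ fH a b z :=
  mul_nonneg (Real.rpow_nonneg hz _) (Real.exp_pos _).le

lemma fH_contOn : ContinuousOn (fH a b) (Ioi 0) := by
  apply ContinuousOn.mul
  · exact (continuousOn_id.rpow_const fun x hx => Or.inl (ne_of_gt hx))
  · exact (Real.continuous_exp.comp (by continuity)).continuousOn

lemma fH_intInt_pos {x y : ℝ} (hx : 0 < x) (hy : 0 < y) :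
    IntervalIntegrable (fH a b) volume x y := by
  apply (fH_contOn.mono ?_).intervalIntegrable
  intro z hz
  rcases le_total x y with h | h
  · rw [uIcc_of_le h] at hz; exact lt_of_lt_of_le hx hz.1
  · rw [uIcc_of_ge h] at hz; exact lt_of_lt_of_le hy hz.1

lemma fH_aesm {s : Set ℝ} (hs : MeasurableSet s) (hsub : s ⊆ Ioi 0) :
    AEStronglyMeasurable (fH a b) (volume.restrict s) :=
  (fH_contOn.mono hsub).aestronglyMeasurable hs

lemma fH_intInt01 (ha : 0 < a) (hb : 0 < b) : IntervalIntegrable (fH a b) volume 0 1 := by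
  rw [intervalIntegrable_iff, uIoc_of_le zero_le_one]
  have h1 : IntegrableOn (fun z : ℝ => Real.exp b * z ^ (a-1)) (Ioc 0 1) volume := by
    have := (intervalIntegrable_rpow' (a := 0) (b := 1) (r := a - 1) (by linarith)).const_mul
      (Real.exp b)
    rwa [intervalIntegrable_iff, uIoc_of_le zero_le_one] at this
  refine h1.mono' (fH_aesm measurableSet_Ioc Ioc_subset_Ioi_self) ?_
  filter_upwards [ae_restrict_mem measurableSet_Ioc] with z hz
  rw [Real.norm_eq_abs, abs_of_nonneg (fH_nonneg z hz.1.le), fH, mul_comm (Real.exp b)]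
  apply mul_le_mul_of_nonneg_left _ (Real.rpow_nonneg hz.1.le _)
  exact Real.exp_le_exp.2 (by nlinarith [hz.1, hz.2])

lemma FH_contAt {u₀ : ℝ} (hu : 0 < u₀) :
    ContinuousAt (fun u => ∫ z in (1:ℝ)..u, fH a b z) u₀ := by
  have h : ContinuousWithinAt (fun u => ∫ z in (1:ℝ)..u, fH a b z) (Icc (u₀/2) (u₀+1)) u₀ := by
    apply intervalIntegral.continuousWithinAt_primitive (measure_singleton _)
    apply fH_intInt_pos
    · positivity
    · positivity
  exact h.continuousAt (Icc_mem_nhds (by linarith) (by linarith))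

lemma gH_contOn : ContinuousOn (gH a b) (Ioi 0) := by
  apply ContinuousOn.mul
  · apply ContinuousOn.mul
    · exact (continuousOn_id.rpow_const fun x hx => Or.inl (ne_of_gt hx))
    · exact (Real.continuous_exp.comp (by continuity)).continuousOn
  · exact fun u hu => (FH_contAt hu).continuousWithinAt

lemma gH_intInt_pos {x y : ℝ} (hx : 0 < x) (hy : 0 < y) :
    IntervalIntegrable (gH a b) volume x y := by
  apply (gH_contOn.mono ?_).intervalIntegrable
  intro z hz
  rcases le_total x y with h | h
  · rw [uIcc_of_le h] at hz; exact lt_of_lt_of_le hx hz.1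
  · rw [uIcc_of_ge h] at hz; exact lt_of_lt_of_le hy hz.1

lemma F2_pos (ha : 0 < a) : 0 < ∫ z in (1:ℝ)..2, fH a b z := by
  apply intervalIntegral.intervalIntegral_pos_of_pos_on (fH_intInt_pos one_pos two_pos)
  · intro z hz
    exact mul_pos (Real.rpow_pos_of_pos (by linarith [hz.1]) _) (Real.exp_pos _)
  · norm_num

lemma F_ge_F2 (ha : 0 < a) {u : ℝ} (hu : 2 ≤ u) :
    (∫ z in (1:ℝ)..2, fH a b z) ≤ ∫ z in (1:ℝ)..u, fH a b z := by
  have hadd := intervalIntegral.integral_add_adjacent_intervals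
    (fH_intInt_pos (a := a) (b := b) one_pos two_pos) (fH_intInt_pos two_pos (by linarith))
  have hnn : 0 ≤ ∫ z in (2:ℝ)..u, fH a b z := by
    apply intervalIntegral.integral_nonneg hu
    intro z hz
    exact fH_nonneg z (by linarith [hz.1])
  linarith

lemma exp_part_atTop (ha : 0 < a) (hb : 0 < b) :
    Tendsto (fun u : ℝ => u ^ (-a) * Real.exp (b * (u - 1))) atTop atTop := by
  have hlog : Tendsto (fun u : ℝ => b * (u - 1) + Real.log u * (-a)) atTop atTop := by
    have hbd := (Real.isLittleO_log_id_atTop.bound (c := b / (2 * a)) (by positivity))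
    have hlin : Tendsto (fun u : ℝ => b / 2 * u - b) atTop atTop := by
      apply Filter.tendsto_atTop_add_const_right
      exact Tendsto.const_mul_atTop (by positivity) tendsto_id
    apply tendsto_atTop_mono' _ _ hlin
    filter_upwards [hbd, eventually_ge_atTop (1:ℝ)] with u hu h1
    simp only [id_eq] at hu
    rw [Real.norm_eq_abs, Real.norm_eq_abs, abs_of_nonneg (Real.log_nonneg h1),
      abs_of_nonneg (by linarith : (0:ℝ) ≤ u)] at hu
    have : a * Real.log u ≤ b / 2 * u := by
      calc a * Real.log u ≤ a * (b / (2 * a) * u) := mul_le_mul_of_nonneg_left hu ha.le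
        _ = b / 2 * u := by field_simp
    nlinarith
  apply (Real.tendsto_exp_atTop.comp hlog).congr'
  filter_upwards [eventually_gt_atTop (0:ℝ)] with u hu
  simp only [Function.comp_apply, Real.exp_add, Real.rpow_def_of_pos hu]
  ring

lemma part1 (ha : 0 < a) (hb : 0 < b) :
    Tendsto (fun x => ∫ u in (1:ℝ)..x, gH a b u) atTop atTop := by
  obtain ⟨M₀, hM₀⟩ := (exp_part_atTop ha hb).eventually_ge_atTop 1 |>.exists_forall_of_atTop
  set M := max M₀ 2 with hMdef
  have hM2 : (2:ℝ) ≤ M := le_max_right _ _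
  have hMpos : (0:ℝ) < M := by linarith
  set c := ∫ z in (1:ℝ)..2, fH a b z with hc
  have hcpos : 0 < c := F2_pos ha
  set C := ∫ u in (1:ℝ)..M, gH a b u with hC
  have key : ∀ x ≥ M, C + c * (x - M) ≤ ∫ u in (1:ℝ)..x, gH a b u := by
    intro x hx
    have hxpos : 0 < x := by linarith
    have hadd := intervalIntegral.integral_add_adjacent_intervals
      (gH_intInt_pos (a := a) (b := b) one_pos hMpos) (gH_intInt_pos hMpos hxpos)
    have hmono : ∫ u in M..x, (c : ℝ) ≤ ∫ u in M..x, gH a b u := by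
      apply intervalIntegral.integral_mono_on hx intervalIntegrable_const
        (gH_intInt_pos hMpos hxpos)
      intro u hu
      have hu2 : 2 ≤ u := le_trans hM2 hu.1
      have h1 : 1 ≤ u ^ (-a) * Real.exp (b * (u - 1)) :=
        hM₀ u (le_trans (le_max_left _ _) hu.1)
      have h2 : c ≤ ∫ z in (1:ℝ)..u, fH a b z := F_ge_F2 ha hu2
      calc c = 1 * c := (one_mul c).symm
        _ ≤ (u ^ (-a) * Real.exp (b * (u - 1))) * ∫ z in (1:ℝ)..u, fH a b z :=
          mul_le_mul h1 h2 hcpos.le (by linarith)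
        _ = gH a b u := rfl
    rw [intervalIntegral.integral_const, smul_eq_mul, mul_comm] at hmono
    linarith
  have hlin : Tendsto (fun x : ℝ => C + c * (x - M)) atTop atTop := by
    apply Filter.tendsto_atTop_add_const_left
    exact Tendsto.const_mul_atTop hcpos (Filter.tendsto_atTop_add_const_right _ _ tendsto_id)
  apply tendsto_atTop_mono' atTop _ hlin
  filter_upwards [eventually_ge_atTop M] with x hx using key x hx

lemma gH_intInt01 (ha : 0 < a) (ha1 : a < 1) (hb : 0 < b) :
    IntervalIntegrable (gH a b) volume 0 1 := by
  have hfint : IntegrableOn (fH a b) (Ioc 0 1) volume := by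
    have := fH_intInt01 (a := a) (b := b) ha hb
    rwa [intervalIntegrable_iff, uIoc_of_le zero_le_one] at this
  set C := ∫ z in Ioc (0:ℝ) 1, fH a b z with hCdef
  have hFbound : ∀ u ∈ Ioc (0:ℝ) 1, |∫ z in (1:ℝ)..u, fH a b z| ≤ C := by
    intro u hu
    rw [intervalIntegral.integral_symm, abs_neg,
      intervalIntegral.integral_of_le hu.2, abs_of_nonneg]
    · apply setIntegral_mono_set hfint
      · filter_upwards [ae_restrict_mem measurableSet_Ioc] with z hz
        exact fH_nonneg z hz.1.le
      · exact Filter.Eventually.of_forall (Ioc_subset_Ioc_left hu.1.le)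
    · apply setIntegral_nonneg measurableSet_Ioc
      intro z hz; exact fH_nonneg z (by linarith [hz.1, hu.1])
  rw [intervalIntegrable_iff, uIoc_of_le zero_le_one]
  have hdom : IntegrableOn (fun u : ℝ => C * u ^ (-a)) (Ioc 0 1) volume := by
    have := (intervalIntegrable_rpow' (a := 0) (b := 1) (r := -a) (by linarith)).const_mul C
    rwa [intervalIntegrable_iff, uIoc_of_le zero_le_one] at this
  refine hdom.mono' ?_ ?_
  · exact (gH_contOn.mono Ioc_subset_Ioi_self).aestronglyMeasurable measurableSet_Ioc
  · filter_upwards [ae_restrict_mem measurableSet_Ioc] with u hu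
    rw [Real.norm_eq_abs, gH, abs_mul, abs_mul,
      abs_of_nonneg (Real.rpow_nonneg hu.1.le _), abs_of_nonneg (Real.exp_pos _).le]
    calc u ^ (-a) * Real.exp (b * (u - 1)) * |∫ z in (1:ℝ)..u, fH a b z|
        ≤ u ^ (-a) * 1 * C := by
          refine mul_le_mul ?_ (hFbound u hu) (abs_nonneg _)
            (mul_nonneg (Real.rpow_nonneg hu.1.le _) zero_le_one)
          apply mul_le_mul_of_nonneg_left _ (Real.rpow_nonneg hu.1.le _)
          exact Real.exp_le_one_iff.2 (by nlinarith [hu.1, hu.2])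
      _ = C * u ^ (-a) := by ring

lemma part2a (ha : 0 < a) (ha1 : a < 1) (hb : 0 < b) :
    ∃ L, Tendsto (fun x => ∫ u in (1:ℝ)..x, gH a b u) (nhdsWithin 0 (Set.Ioi 0)) (nhds L) := by
  refine ⟨∫ u in (1:ℝ)..(0:ℝ), gH a b u, ?_⟩
  have h : ContinuousWithinAt (fun x => ∫ u in (1:ℝ)..x, gH a b u) (Icc 0 1) 0 := by
    apply intervalIntegral.continuousWithinAt_primitive (measure_singleton _)
    have : (min (1:ℝ) 0) = 0 := by norm_num
    rw [this]
    have : (max (1:ℝ) 1) = 1 := by norm_num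
    rw [this]
    exact gH_intInt01 ha ha1 hb
  have := h.tendsto
  rw [← nhdsWithin_Ioc_eq_nhdsGT (zero_lt_one (α := ℝ))]
  exact this.mono_left (nhdsWithin_mono _ Ioc_subset_Icc_self)

lemma part2b (ha1 : 1 ≤ a) (hb : 0 < b) :
    Tendsto (fun x => ∫ u in (1:ℝ)..x, gH a b u) (nhdsWithin 0 (Set.Ioi 0)) atTop := by
  have ha : 0 < a := lt_of_lt_of_le one_pos ha1
  set c₂ := ∫ z in (1/2:ℝ)..1, fH a b z with hc₂
  have hc₂pos : 0 < c₂ := by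
    apply intervalIntegral.intervalIntegral_pos_of_pos_on (fH_intInt_pos (by norm_num) one_pos)
    · intro z hz
      exact mul_pos (Real.rpow_pos_of_pos (by linarith [hz.1]) _) (Real.exp_pos _)
    · norm_num
  set c₃ := Real.exp (-b) * c₂ with hc₃
  have hc₃pos : 0 < c₃ := mul_pos (Real.exp_pos _) hc₂pos
  set C₄ := ∫ u in (1:ℝ)..(1/2:ℝ), gH a b u with hC₄
  -- pointwise bound on (0, 1/2]
  have hpt : ∀ u ∈ Set.Ioc (0:ℝ) (1/2), gH a b u ≤ -c₃ * u⁻¹ := by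
    intro u hu
    have hu0 := hu.1
    have hFle : (∫ z in (1:ℝ)..u, fH a b z) ≤ -c₂ := by
      have hadd := intervalIntegral.integral_add_adjacent_intervals
        (fH_intInt_pos (a := a) (b := b) hu0 (by norm_num : (0:ℝ) < 1/2))
        (fH_intInt_pos (by norm_num : (0:ℝ) < 1/2) one_pos)
      have hnn : 0 ≤ ∫ z in u..(1/2:ℝ), fH a b z := by
        apply intervalIntegral.integral_nonneg hu.2
        intro z hz; exact fH_nonneg z (by linarith [hz.1])
      rw [intervalIntegral.integral_symm]
      linarith
    have hm : Real.exp (-b) * u⁻¹ ≤ u ^ (-a) * Real.exp (b * (u - 1)) := by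
      have h1 : u ^ (-1:ℝ) ≤ u ^ (-a) :=
        Real.rpow_le_rpow_of_exponent_ge hu0 (by linarith [hu.2]) (by linarith)
      rw [Real.rpow_neg_one] at h1
      have h2 : Real.exp (-b) ≤ Real.exp (b * (u - 1)) :=
        Real.exp_le_exp.2 (by nlinarith [hu0])
      calc Real.exp (-b) * u⁻¹ ≤ Real.exp (b * (u - 1)) * u ^ (-a) :=
            mul_le_mul h2 h1 (by positivity) (Real.exp_pos _).le
        _ = u ^ (-a) * Real.exp (b * (u - 1)) := mul_comm _ _
    calc gH a b u = (u ^ (-a) * Real.exp (b * (u - 1))) * ∫ z in (1:ℝ)..u, fH a b z := rfl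
      _ ≤ (u ^ (-a) * Real.exp (b * (u - 1))) * (-c₂) := by
          apply mul_le_mul_of_nonneg_left hFle
          positivity
      _ ≤ (Real.exp (-b) * u⁻¹) * (-c₂) := by nlinarith
      _ = -c₃ * u⁻¹ := by rw [hc₃]; ring
  -- key lower bound
  have key : ∀ x ∈ Set.Ioc (0:ℝ) (1/2),
      C₄ + (c₃ * Real.log (1/2) - c₃ * Real.log x) ≤ ∫ u in (1:ℝ)..x, gH a b u := by
    intro x hx
    have hx0 := hx.1
    have hadd := intervalIntegral.integral_add_adjacent_intervals
      (gH_intInt_pos (a := a) (b := b) one_pos (by norm_num : (0:ℝ) < 1/2))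
      (gH_intInt_pos (by norm_num : (0:ℝ) < 1/2) hx0)
    have hmono : (∫ u in x..(1/2:ℝ), gH a b u) ≤ ∫ u in x..(1/2:ℝ), -c₃ * u⁻¹ := by
      apply intervalIntegral.integral_mono_on hx.2 (gH_intInt_pos hx0 (by norm_num))
      · apply ContinuousOn.intervalIntegrable
        apply (continuousOn_const.mul (continuousOn_inv₀.mono ?_))
        intro z hz
        rcases le_total x (1/2:ℝ) with h | h
        · rw [uIcc_of_le h] at hz; exact ne_of_gt (lt_of_lt_of_le hx0 hz.1)
        · rw [uIcc_of_ge h] at hz; exact ne_of_gt (lt_of_lt_of_le (by norm_num) hz.1)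
      · intro u hu
        exact hpt u ⟨lt_of_lt_of_le hx0 hu.1, hu.2⟩
    have hcomp : (∫ u in x..(1/2:ℝ), -c₃ * u⁻¹) = -c₃ * (Real.log (1/2) - Real.log x) := by
      rw [intervalIntegral.integral_const_mul, integral_inv_of_pos hx0
        (by norm_num), Real.log_div (by norm_num) (ne_of_gt hx0)]
    have hsymm : (∫ u in (1/2:ℝ)..x, gH a b u) = -∫ u in x..(1/2:ℝ), gH a b u :=
      intervalIntegral.integral_symm x (1/2)
    rw [← hadd, hsymm]
    rw [hcomp] at hmono
    linarith
  -- conclude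
  have hlog : Tendsto (fun x : ℝ => C₄ + (c₃ * Real.log (1/2) - c₃ * Real.log x))
      (nhdsWithin 0 (Set.Ioi 0)) atTop := by
    have hlb : Tendsto (fun x : ℝ => Real.log x) (nhdsWithin (0:ℝ) (Set.Ioi 0)) atBot :=
      Real.tendsto_log_nhdsNE_zero.mono_left
        (nhdsWithin_mono _ (fun x hx => ne_of_gt hx))
    have h1 : Tendsto (fun x : ℝ => c₃ * Real.log x) (nhdsWithin (0:ℝ) (Set.Ioi 0)) atBot :=
      Tendsto.const_mul_atBot hc₃pos hlb
    have h2 : Tendsto (fun x : ℝ => -(c₃ * Real.log x)) (nhdsWithin (0:ℝ) (Set.Ioi 0)) atTop :=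
      tendsto_neg_atBot_atTop.comp h1
    simp only [sub_eq_add_neg]
    exact tendsto_atTop_add_const_left _ _ (tendsto_atTop_add_const_left _ _ h2)
  apply tendsto_atTop_mono' _ _ hlog
  filter_upwards [Ioc_mem_nhdsGT_of_mem (show (0:ℝ) ∈ Set.Ico (0:ℝ) (1/2) by norm_num)] with x hx
  exact key x hx

/-- Feller boundary classification for the Heston variance process via its
scale function: `+∞` is unattainable, and `0` is attainable iff `2κθ < ε²`. -/
theorem stmt7 (κ θ ε : ℝ) (hκ : 0 < κ) (hθ : 0 < θ) (hε : 0 < ε) :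
    (Tendsto (fun x : ℝ => (2 / ε ^ 2) * ∫ u in (1:ℝ)..x,
        u ^ (-(2 * κ * θ / ε ^ 2)) * Real.exp ((2 * κ / ε ^ 2) * (u - 1)) *
          ∫ z in (1:ℝ)..u, z ^ (2 * κ * θ / ε ^ 2 - 1) *
            Real.exp (-(2 * κ / ε ^ 2) * (z - 1))) atTop atTop) ∧
    ((∃ L : ℝ, Tendsto (fun x : ℝ => (2 / ε ^ 2) * ∫ u in (1:ℝ)..x,
        u ^ (-(2 * κ * θ / ε ^ 2)) * Real.exp ((2 * κ / ε ^ 2) * (u - 1)) *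
          ∫ z in (1:ℝ)..u, z ^ (2 * κ * θ / ε ^ 2 - 1) *
            Real.exp (-(2 * κ / ε ^ 2) * (z - 1)))
        (nhdsWithin 0 (Set.Ioi 0)) (nhds L)) ↔ 2 * κ * θ < ε ^ 2) := by
  have hε2 : (0:ℝ) < ε ^ 2 := by positivity
  set a := 2 * κ * θ / ε ^ 2 with hadef
  set b := 2 * κ / ε ^ 2 with hbdef
  have ha : 0 < a := by positivity
  have hb : 0 < b := by positivity
  have hc : (0:ℝ) < 2 / ε ^ 2 := by positivity
  have hrw : ∀ u : ℝ, (u ^ (-a) * Real.exp (b * (u - 1)) *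
      ∫ z in (1:ℝ)..u, z ^ (a - 1) * Real.exp (-b * (z - 1))) = gH a b u := by
    intro u; simp only [gH, fH, neg_mul]
  have hfun : ∀ x : ℝ, ((2 / ε ^ 2) * ∫ u in (1:ℝ)..x,
      u ^ (-a) * Real.exp (b * (u - 1)) *
        ∫ z in (1:ℝ)..u, z ^ (a - 1) * Real.exp (-b * (z - 1)))
      = (2 / ε ^ 2) * ∫ u in (1:ℝ)..x, gH a b u := by
    intro x
    rfl
  constructor
  · have h1 := (part1 ha hb).const_mul_atTop hc
    exact h1.congr fun x => (hfun x).symm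
  · have hiff : 2 * κ * θ < ε ^ 2 ↔ a < 1 := by
      rw [hadef, div_lt_one hε2]
    rw [hiff]
    constructor
    · rintro ⟨L, hL⟩
      by_contra hcon
      push_neg at hcon
      have h2 := (part2b hcon hb).const_mul_atTop hc
      have h2' := h2.congr fun x => (hfun x).symm
      exact not_tendsto_nhds_of_tendsto_atTop h2' L hL
    · intro ha1
      obtain ⟨L, hL⟩ := part2a ha ha1 hb
      refine ⟨(2 / ε ^ 2) * L, ?_⟩
      have := (hL.const_mul (2 / ε ^ 2))
      exact this.congr fun x => (hfun x).symm
end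

section
/- For the 3/2 variance model, the scale-measure integral p(x) = (2/ε²)∫₁^x u^{2κ/ε²} e^{(4κθ/ε²)(1/u − 1)} (∫₁^u z^{−2κ/ε² − 3} e^{−(4κθ/ε²)(1/z − 1)} dz) du satisfies: lim_{x→0⁺} p(x) = +∞ for all admissible parameters, and lim_{x→+∞} p(x) is finite if and only if 2κ < −ε². -/
open Filter MeasureTheory Set intervalIntegral Real Topology

namespace Stmt8Aux

noncomputable def G (a b z : ℝ) : ℝ := z ^ (-a - 3) * Real.exp (-b * (1 / z - 1))
noncomputable def S (a b u : ℝ) : ℝ := u ^ a * Real.exp (b * (1 / u - 1))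
noncomputable def F (a b u : ℝ) : ℝ := S a b u * ∫ z in (1:ℝ)..u, G a b z

lemma G_pos {a b z : ℝ} (hz : 0 < z) : 0 < G a b z :=
  mul_pos (Real.rpow_pos_of_pos hz _) (Real.exp_pos _)

lemma S_pos {a b u : ℝ} (hu : 0 < u) : 0 < S a b u :=
  mul_pos (Real.rpow_pos_of_pos hu _) (Real.exp_pos _)

lemma contOn_G (a b : ℝ) : ContinuousOn (G a b) (Ioi 0) := by
  intro z hz
  have hz0 : (z:ℝ) ≠ 0 := ne_of_gt hz
  apply ContinuousAt.continuousWithinAt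
  exact (Real.continuousAt_rpow_const z _ (Or.inl hz0)).mul
    (ContinuousAt.rexp (continuousAt_const.mul ((continuous_const.continuousAt.div continuousAt_id hz0).sub continuousAt_const)))

lemma contOn_S (a b : ℝ) : ContinuousOn (S a b) (Ioi 0) := by
  intro u hu
  have hu0 : (u:ℝ) ≠ 0 := ne_of_gt hu
  apply ContinuousAt.continuousWithinAt
  exact (Real.continuousAt_rpow_const u _ (Or.inl hu0)).mul
    (ContinuousAt.rexp (continuousAt_const.mul ((continuous_const.continuousAt.div continuousAt_id hu0).sub continuousAt_const)))

lemma uIcc_subset_Ioi {c d : ℝ} (hc : 0 < c) (hd : 0 < d) : uIcc c d ⊆ Ioi 0 :=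
  fun z hz => lt_of_lt_of_le (lt_min hc hd) hz.1

lemma G_intble {a b : ℝ} {c d : ℝ} (hc : 0 < c) (hd : 0 < d) :
    IntervalIntegrable (G a b) volume c d :=
  ((contOn_G a b).mono (uIcc_subset_Ioi hc hd)).intervalIntegrable

lemma contAt_I {a b : ℝ} {u : ℝ} (hu : 0 < u) :
    ContinuousAt (fun v => ∫ z in (1:ℝ)..v, G a b z) u := by
  have h1 : u / 2 < u := by linarith
  have h2 : u < u + 1 := by linarith
  apply ContinuousWithinAt.continuousAt _ (Icc_mem_nhds h1 h2)
  apply intervalIntegral.continuousWithinAt_primitive (measure_singleton u)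
  exact G_intble (by positivity) (by positivity)

lemma contOn_F (a b : ℝ) : ContinuousOn (F a b) (Ioi 0) := by
  intro u hu
  exact (((contOn_S a b) u hu).mul (contAt_I hu).continuousWithinAt)

lemma F_intble {a b : ℝ} {c d : ℝ} (hc : 0 < c) (hd : 0 < d) :
    IntervalIntegrable (F a b) volume c d :=
  ((contOn_F a b).mono (uIcc_subset_Ioi hc hd)).intervalIntegrable

lemma G_nonneg {a b z : ℝ} (hz : 0 < z) : 0 ≤ G a b z := (G_pos hz).le

lemma I_nonneg {a b u : ℝ} (hu : 1 ≤ u) : 0 ≤ ∫ z in (1:ℝ)..u, G a b z :=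
  intervalIntegral.integral_nonneg hu (fun z hz => G_nonneg (by linarith [hz.1]))

lemma F_nonneg {a b u : ℝ} (hu : 1 ≤ u) : 0 ≤ F a b u :=
  mul_nonneg (S_pos (by linarith : (0:ℝ) < u)).le (I_nonneg hu)

lemma tendsto_fin {a b : ℝ} (ha : a < -1) :
    ∃ L : ℝ, Tendsto (fun x => ∫ u in (1:ℝ)..x, F a b u) atTop (𝓝 L) := by
  set δ : ℝ := (-1 - a) / 2 with hδdef
  have hδ : 0 < δ := by rw [hδdef]; linarith
  have haδ : a = -1 - 2 * δ := by rw [hδdef]; ring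
  set m : ℝ := max (-a - 3) (-1 + δ) with hmdef
  have hm : -1 < m := lt_of_lt_of_le (by linarith) (le_max_right _ _)
  have hm1 : 0 < m + 1 := by linarith
  set r : ℝ := max (-2 : ℝ) (-1 - δ) with hrdef
  have hr : r < -1 := max_lt (by norm_num) (by linarith)
  have hram : a + (m + 1) = r := by
    rcases le_total (-a - 3) (-1 + δ) with h | h
    · rw [hmdef, max_eq_right h, hrdef, max_eq_right (by linarith : (-2:ℝ) ≤ -1 - δ)]
      linarith
    · rw [hmdef, max_eq_left h, hrdef, max_eq_left (by linarith : (-1:ℝ) - δ ≤ -2)]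
      linarith
  set C : ℝ := Real.exp |b| * Real.exp |b| / (m + 1) with hCdef
  -- pointwise bound
  have hbound : ∀ u : ℝ, 1 ≤ u → F a b u ≤ C * u ^ r := by
    intro u hu1
    have hu0 : (0:ℝ) < u := by linarith
    have hS : S a b u ≤ u ^ a * Real.exp |b| := by
      unfold S
      have h2 : Real.exp (b * (1/u - 1)) ≤ Real.exp |b| := by
        apply Real.exp_le_exp.2
        have : |b * (1/u - 1)| ≤ |b| := by
          rw [abs_mul]
          have h3 : |1/u - 1| ≤ 1 := by
            rw [abs_le]
            have h4 : 0 < 1/u := by positivity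
            have h5 : 1/u ≤ 1 := by rw [div_le_one hu0]; exact hu1
            constructor <;> linarith
          calc |b| * |1/u - 1| ≤ |b| * 1 := mul_le_mul_of_nonneg_left h3 (abs_nonneg b)
            _ = |b| := mul_one _
        linarith [le_abs_self (b * (1/u - 1))]
      exact mul_le_mul_of_nonneg_left h2 (Real.rpow_nonneg hu0.le _)
    have hIle : (∫ z in (1:ℝ)..u, G a b z) ≤ Real.exp |b| * (u ^ (m + 1) / (m + 1)) := by
      have hGle : ∀ z ∈ Icc (1:ℝ) u, G a b z ≤ Real.exp |b| * z ^ m := by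
        intro z hz
        have hz1 : (1:ℝ) ≤ z := hz.1
        have hz0 : (0:ℝ) < z := by linarith
        have h1 : z ^ (-a - 3) ≤ z ^ m := Real.rpow_le_rpow_of_exponent_le hz1 (le_max_left _ _)
        have h2 : Real.exp (-b * (1/z - 1)) ≤ Real.exp |b| := by
          apply Real.exp_le_exp.2
          have : |(-b) * (1/z - 1)| ≤ |b| := by
            rw [abs_mul, abs_neg]
            have h3 : |1/z - 1| ≤ 1 := by
              rw [abs_le]
              have h4 : 0 < 1/z := by positivity
              have h5 : 1/z ≤ 1 := by rw [div_le_one hz0]; exact hz1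
              constructor <;> linarith
            calc |b| * |1/z - 1| ≤ |b| * 1 := mul_le_mul_of_nonneg_left h3 (abs_nonneg b)
              _ = |b| := mul_one _
          have := le_abs_self ((-b) * (1/z - 1))
          have hnb : -b * (1/z - 1) = (-b) * (1/z - 1) := by ring
          linarith [le_abs_self ((-b) * (1/z - 1))]
        calc G a b z = z ^ (-a - 3) * Real.exp (-b * (1/z - 1)) := rfl
          _ ≤ z ^ m * Real.exp |b| :=
              mul_le_mul h1 h2 (Real.exp_pos _).le (Real.rpow_nonneg hz0.le _)
          _ = Real.exp |b| * z ^ m := mul_comm _ _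
      have hint_rm : IntervalIntegrable (fun z : ℝ => Real.exp |b| * z ^ m) volume 1 u :=
        (intervalIntegral.intervalIntegrable_rpow' hm).const_mul _
      have h1 : (∫ z in (1:ℝ)..u, G a b z) ≤ ∫ z in (1:ℝ)..u, Real.exp |b| * z ^ m :=
        integral_mono_on hu1 (G_intble one_pos hu0) hint_rm hGle
      have h2 : (∫ z in (1:ℝ)..u, Real.exp |b| * z ^ m)
          = Real.exp |b| * ((u ^ (m+1) - 1) / (m + 1)) := by
        rw [intervalIntegral.integral_const_mul, integral_rpow (Or.inl hm)]
        norm_num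
      have h3 : (u ^ (m+1) - 1) / (m + 1) ≤ u ^ (m+1) / (m + 1) := by
        apply div_le_div_of_nonneg_right (by linarith) hm1.le
      calc (∫ z in (1:ℝ)..u, G a b z) ≤ Real.exp |b| * ((u ^ (m+1) - 1) / (m + 1)) := by
            rw [← h2]; exact h1
        _ ≤ Real.exp |b| * (u ^ (m+1) / (m + 1)) :=
            mul_le_mul_of_nonneg_left h3 (Real.exp_pos _).le
    calc F a b u = S a b u * ∫ z in (1:ℝ)..u, G a b z := rfl
      _ ≤ (u ^ a * Real.exp |b|) * (Real.exp |b| * (u ^ (m + 1) / (m + 1))) := by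
          apply mul_le_mul hS hIle (I_nonneg hu1)
          positivity
      _ = C * (u ^ a * u ^ (m + 1)) := by rw [hCdef]; ring
      _ = C * u ^ r := by rw [← Real.rpow_add hu0, hram]
  -- integrability
  have hInt : IntegrableOn (F a b) (Ioi 1) := by
    have hmeas : AEStronglyMeasurable (F a b) (volume.restrict (Ioi 1)) :=
      ((contOn_F a b).mono (Ioi_subset_Ioi zero_le_one)).aestronglyMeasurable measurableSet_Ioi
    apply Integrable.mono' (((integrableOn_Ioi_rpow_of_lt hr one_pos).const_mul C)) hmeas
    filter_upwards [ae_restrict_mem measurableSet_Ioi] with u hu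
    rw [Real.norm_eq_abs, abs_of_nonneg (F_nonneg (le_of_lt hu))]
    exact hbound u (le_of_lt hu)
  exact ⟨_, intervalIntegral_tendsto_integral_Ioi 1 hInt tendsto_id⟩

lemma tendsto_div {a b : ℝ} (ha : -1 ≤ a) :
    Tendsto (fun x => ∫ u in (1:ℝ)..x, F a b u) atTop atTop := by
  have hc0 : 0 < ∫ z in (1:ℝ)..2, G a b z :=
    intervalIntegral_pos_of_pos_on (G_intble one_pos two_pos)
      (fun z hz => G_pos (by linarith [hz.1])) one_lt_two
  set c₀ : ℝ := ∫ z in (1:ℝ)..2, G a b z with hc₀def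
  set c : ℝ := Real.exp (-|b|) * c₀ with hcdef
  have hc : 0 < c := mul_pos (Real.exp_pos _) hc0
  -- pointwise lower bound for u ≥ 2
  have hlow : ∀ u : ℝ, 2 ≤ u → c * u⁻¹ ≤ F a b u := by
    intro u hu2
    have hu0 : 0 < u := by linarith
    have hu1 : (1:ℝ) ≤ u := by linarith
    have hS : u⁻¹ * Real.exp (-|b|) ≤ S a b u := by
      have h1 : u ^ (-1:ℝ) ≤ u ^ a := Real.rpow_le_rpow_of_exponent_le hu1 ha
      have h2 : Real.exp (-|b|) ≤ Real.exp (b * (1/u - 1)) := by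
        apply Real.exp_le_exp.2
        have habs : |b * (1/u - 1)| ≤ |b| := by
          rw [abs_mul]
          have : |1/u - 1| ≤ 1 := by
            rw [abs_le]
            constructor
            · have : 0 < 1/u := by positivity
              linarith
            · have : 1/u ≤ 1 := by
                rw [div_le_one hu0]; linarith
              linarith
          calc |b| * |1/u - 1| ≤ |b| * 1 := by
                exact mul_le_mul_of_nonneg_left this (abs_nonneg b)
            _ = |b| := mul_one _
        linarith [neg_abs_le (b * (1/u - 1))]
      calc u⁻¹ * Real.exp (-|b|) = u ^ (-1:ℝ) * Real.exp (-|b|) := by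
            rw [Real.rpow_neg_one]
        _ ≤ u ^ a * Real.exp (b * (1/u - 1)) := by
            apply mul_le_mul h1 h2 (Real.exp_pos _).le (Real.rpow_nonneg hu0.le _)
        _ = S a b u := rfl
    have hI : c₀ ≤ ∫ z in (1:ℝ)..u, G a b z := by
      have hsplit : (∫ z in (1:ℝ)..2, G a b z) + ∫ z in (2:ℝ)..u, G a b z
          = ∫ z in (1:ℝ)..u, G a b z :=
        integral_add_adjacent_intervals (G_intble one_pos two_pos) (G_intble two_pos hu0)
      have h2 : 0 ≤ ∫ z in (2:ℝ)..u, G a b z :=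
        intervalIntegral.integral_nonneg hu2 (fun z hz => G_nonneg (by linarith [hz.1]))
      linarith
    calc c * u⁻¹ = (u⁻¹ * Real.exp (-|b|)) * c₀ := by rw [hcdef]; ring
      _ ≤ S a b u * ∫ z in (1:ℝ)..u, G a b z := by
          apply mul_le_mul hS hI hc0.le (S_pos hu0).le
      _ = F a b u := rfl
  -- main comparison
  set A : ℝ := ∫ u in (1:ℝ)..2, F a b u with hAdef
  have hmain : ∀ x : ℝ, 2 ≤ x →
      A + c * Real.log (x / 2) ≤ ∫ u in (1:ℝ)..x, F a b u := by
    intro x hx2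
    have hx0 : 0 < x := by linarith
    have hsplit : A + (∫ u in (2:ℝ)..x, F a b u) = ∫ u in (1:ℝ)..x, F a b u :=
      integral_add_adjacent_intervals (F_intble one_pos two_pos) (F_intble two_pos hx0)
    have hint_inv : IntervalIntegrable (fun u : ℝ => c * u⁻¹) volume 2 x := by
      apply IntervalIntegrable.const_mul
      apply intervalIntegrable_inv
      intro z hz
      · have h2 : (0:ℝ) < min 2 x := lt_min two_pos hx0
        exact ne_of_gt (lt_of_lt_of_le h2 hz.1)
      · exact continuousOn_id
    have hcomp : c * Real.log (x / 2) ≤ ∫ u in (2:ℝ)..x, F a b u := by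
      have h1 : ∫ u in (2:ℝ)..x, c * u⁻¹ ≤ ∫ u in (2:ℝ)..x, F a b u := by
        apply integral_mono_on hx2 hint_inv (F_intble two_pos hx0)
        intro u hu
        exact hlow u hu.1
      have h2 : ∫ u in (2:ℝ)..x, c * u⁻¹ = c * Real.log (x / 2) := by
        rw [intervalIntegral.integral_const_mul, integral_inv_of_pos two_pos hx0]
      linarith
    linarith
  -- conclude
  have hbase : Tendsto (fun x : ℝ => A + c * Real.log (x / 2)) atTop atTop := by
    apply tendsto_atTop_add_const_left
    apply Tendsto.const_mul_atTop hc
    exact Real.tendsto_log_atTop.comp (tendsto_id.atTop_div_const two_pos)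
  apply tendsto_atTop_mono' atTop _ hbase
  filter_upwards [eventually_ge_atTop (2:ℝ)] with x hx
  exact hmain x hx

lemma tendsto_zero (a b : ℝ) :
    Tendsto (fun x => ∫ u in (1:ℝ)..x, F a b u) (nhdsWithin 0 (Ioi 0)) atTop := by
  set c₁ : ℝ := min 1 ((2:ℝ) ^ (-a - 3)) with hc₁def
  have hc₁ : 0 < c₁ := lt_min one_pos (Real.rpow_pos_of_pos two_pos _)
  set c : ℝ := c₁ * Real.exp (-|b|) with hcdef
  have hc : 0 < c := mul_pos hc₁ (Real.exp_pos _)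
  -- pointwise lower bound on (0, 1/2]
  have hlow : ∀ u : ℝ, 0 < u → u ≤ 1/2 → c * u⁻¹ ≤ -F a b u := by
    intro u hu0 hu2
    have huu : u + u^2 ≤ 1 := by nlinarith
    have huu0 : 0 < u + u^2 := by positivity
    have huu' : u ≤ u + u^2 := by nlinarith
    -- pointwise bound on G on [u, u+u^2]
    set K : ℝ := c₁ * u ^ (-a - 3) * (Real.exp (-|b|) * Real.exp (-b * (1/u - 1))) with hKdef
    have hGlow : ∀ z ∈ Icc u (u + u^2), K ≤ G a b z := by
      intro z hz
      have hz0 : 0 < z := lt_of_lt_of_le hu0 hz.1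
      have hz2u : z ≤ 2 * u := by nlinarith [hz.2]
      have h1 : c₁ * u ^ (-a - 3) ≤ z ^ (-a - 3) := by
        rcases le_or_gt 0 (-a - 3) with h | h
        · have := Real.rpow_le_rpow hu0.le hz.1 h
          calc c₁ * u ^ (-a - 3) ≤ 1 * u ^ (-a - 3) :=
                mul_le_mul_of_nonneg_right (min_le_left _ _) (Real.rpow_nonneg hu0.le _)
            _ = u ^ (-a - 3) := one_mul _
            _ ≤ z ^ (-a - 3) := this
        · have hanti := Real.antitoneOn_rpow_Ioi_of_exponent_nonpos (le_of_lt h)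
            (mem_Ioi.2 hz0) (mem_Ioi.2 (by positivity : (0:ℝ) < 2 * u)) hz2u
          have h2u : (2 * u) ^ (-a - 3) = 2 ^ (-a - 3) * u ^ (-a - 3) :=
            Real.mul_rpow (by norm_num) hu0.le
          calc c₁ * u ^ (-a - 3) ≤ 2 ^ (-a - 3) * u ^ (-a - 3) :=
                mul_le_mul_of_nonneg_right (min_le_right _ _) (Real.rpow_nonneg hu0.le _)
            _ = (2 * u) ^ (-a - 3) := h2u.symm
            _ ≤ z ^ (-a - 3) := hanti
      have h2 : Real.exp (-|b|) * Real.exp (-b * (1/u - 1)) ≤ Real.exp (-b * (1/z - 1)) := by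
        rw [← Real.exp_add]
        apply Real.exp_le_exp.2
        have hzu : 1/z ≤ 1/u := by
          rw [one_div, one_div]
          exact inv_anti₀ hu0 hz.1
        have hlow2 : 1/u - 1/z ≤ 1 := by
          have h3 : 1/(u + u^2) ≤ 1/z := by
            rw [one_div, one_div]
            exact inv_anti₀ hz0 hz.2
          have h4 : 1/u - 1/(u + u^2) ≤ 1 := by
            rw [div_sub_div _ _ (ne_of_gt hu0) (ne_of_gt huu0)]
            rw [div_le_one (by positivity)]
            nlinarith
          linarith
        have habs : |b * (1/u - 1/z)| ≤ |b| := by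
          rw [abs_mul]
          have h5 : |1/u - 1/z| ≤ 1 := by
            rw [abs_le]; constructor <;> [linarith; linarith]
          calc |b| * |1/u - 1/z| ≤ |b| * 1 := mul_le_mul_of_nonneg_left h5 (abs_nonneg b)
            _ = |b| := mul_one _
        have : -(b * (1/u - 1/z)) ≤ |b| := by
          have := neg_abs_le (b * (1/u - 1/z)); linarith
        nlinarith [this]
      calc K = (c₁ * u ^ (-a - 3)) * (Real.exp (-|b|) * Real.exp (-b * (1/u - 1))) := rfl
        _ ≤ z ^ (-a - 3) * Real.exp (-b * (1/z - 1)) := by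
            apply mul_le_mul h1 h2 (by positivity) (Real.rpow_nonneg hz0.le _)
        _ = G a b z := rfl
    -- integral lower bound
    have hIpart : u^2 * K ≤ ∫ z in u..(u + u^2), G a b z := by
      have h1 : ∫ z in u..(u + u^2), (K : ℝ) ≤ ∫ z in u..(u + u^2), G a b z := by
        apply integral_mono_on huu' intervalIntegrable_const (G_intble hu0 huu0) hGlow
      rwa [intervalIntegral.integral_const, smul_eq_mul, add_sub_cancel_left] at h1
    have hsplit : (∫ z in u..(u + u^2), G a b z) + (∫ z in (u + u^2)..1, G a b z)
        = ∫ z in u..(1:ℝ), G a b z :=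
      integral_add_adjacent_intervals (G_intble hu0 huu0) (G_intble huu0 one_pos)
    have hrest : 0 ≤ ∫ z in (u + u^2)..1, G a b z :=
      intervalIntegral.integral_nonneg huu (fun z hz => (G_pos (lt_of_lt_of_le huu0 hz.1)).le)
    have hI : u^2 * K ≤ ∫ z in u..(1:ℝ), G a b z := by linarith
    -- combine
    have hFeq : -F a b u = S a b u * ∫ z in u..(1:ℝ), G a b z := by
      unfold F
      rw [intervalIntegral.integral_symm]
      ring
    have hcomb : S a b u * (u^2 * K) ≤ -F a b u := by
      rw [hFeq]
      exact mul_le_mul_of_nonneg_left hI (S_pos hu0).le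
    have hsimp : S a b u * (u^2 * K) = c * u⁻¹ := by
      have hexp : Real.exp (b * (1/u - 1)) * Real.exp (-b * (1/u - 1)) = 1 := by
        rw [← Real.exp_add, show b * (1/u - 1) + -b * (1/u - 1) = 0 by ring, Real.exp_zero]
      have hpow : u ^ a * u ^ (-a - 3) * u ^ 2 = u⁻¹ := by
        have h1 : u ^ a * u ^ (-a - 3) = u ^ (-3 : ℝ) := by
          rw [← Real.rpow_add hu0]; congr 1; ring
        have h2 : u ^ (-3 : ℝ) = (u ^ (3:ℕ))⁻¹ := by
          rw [show (-3 : ℝ) = -((3:ℕ):ℝ) by norm_num, Real.rpow_neg hu0.le, Real.rpow_natCast]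
        rw [h1, h2]
        field_simp
      calc S a b u * (u^2 * K)
          = (u ^ a * u ^ (-a - 3) * u ^ 2) * (c₁ * Real.exp (-|b|)) *
            (Real.exp (b * (1/u - 1)) * Real.exp (-b * (1/u - 1))) := by
            unfold S; rw [hKdef]; ring
        _ = c * u⁻¹ := by rw [hexp, hpow, hcdef]; ring
    linarith [hcomb, hsimp.le, hsimp.ge]
  -- main comparison and conclusion
  set A : ℝ := ∫ u in (1/2:ℝ)..1, F a b u with hAdef
  have hmain : ∀ x : ℝ, 0 < x → x < 1/2 →
      c * (Real.log (1/2) - Real.log x) - A ≤ ∫ u in (1:ℝ)..x, F a b u := by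
    intro x hx0 hx2
    have hhalf : (0:ℝ) < 1/2 := by norm_num
    have hsplit : (∫ u in x..(1/2:ℝ), F a b u) + A = ∫ u in x..(1:ℝ), F a b u :=
      integral_add_adjacent_intervals (F_intble hx0 hhalf) (F_intble hhalf one_pos)
    have hsym : (∫ u in (1:ℝ)..x, F a b u) = -∫ u in x..(1:ℝ), F a b u :=
      intervalIntegral.integral_symm x 1
    have hint_inv : IntervalIntegrable (fun u : ℝ => c * u⁻¹) volume x (1/2) := by
      apply IntervalIntegrable.const_mul
      apply intervalIntegrable_inv
      · intro z hz
        exact ne_of_gt (lt_of_lt_of_le (lt_min hx0 hhalf) hz.1)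
      · exact continuousOn_id
    have hcmp : (∫ u in x..(1/2:ℝ), c * u⁻¹) ≤ ∫ u in x..(1/2:ℝ), (-F a b u) := by
      apply integral_mono_on (le_of_lt hx2) hint_inv (F_intble hx0 hhalf).neg
      intro u hu
      exact hlow u (lt_of_lt_of_le hx0 hu.1) hu.2
    have h2 : (∫ u in x..(1/2:ℝ), c * u⁻¹) = c * (Real.log (1/2) - Real.log x) := by
      rw [intervalIntegral.integral_const_mul, integral_inv_of_pos hx0 hhalf,
        Real.log_div (by norm_num) (ne_of_gt hx0)]
    have h3 : (∫ u in x..(1/2:ℝ), (-F a b u)) = -∫ u in x..(1/2:ℝ), F a b u :=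
      intervalIntegral.integral_neg
    linarith
  have hbase : Tendsto (fun x : ℝ => c * (Real.log (1/2) - Real.log x) - A)
      (nhdsWithin 0 (Ioi 0)) atTop := by
    have hlog : Tendsto Real.log (nhdsWithin (0:ℝ) (Ioi 0)) atBot :=
      Real.tendsto_log_nhdsNE_zero.mono_left
        (nhdsWithin_mono 0 (fun x hx => ne_of_gt hx))
    have h1 : Tendsto (fun x : ℝ => -Real.log x) (nhdsWithin (0:ℝ) (Ioi 0)) atTop :=
      tendsto_neg_atBot_atTop.comp hlog
    have h2 : Tendsto (fun x : ℝ => c * (-Real.log x)) (nhdsWithin (0:ℝ) (Ioi 0)) atTop :=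
      h1.const_mul_atTop hc
    have h3 := tendsto_atTop_add_const_left (nhdsWithin (0:ℝ) (Ioi 0))
      (c * Real.log (1/2) - A) h2
    apply h3.congr
    intro x
    ring
  apply tendsto_atTop_mono' _ _ hbase
  filter_upwards [Ioo_mem_nhdsGT_of_mem
    (show (0:ℝ) ∈ Ico (0:ℝ) (1/2) by constructor <;> norm_num)] with x hx
  exact hmain x hx.1 hx.2

end Stmt8Aux


/-- Feller boundary classification for the 3/2 variance model via its scale
function: `0` is unattainable for all parameters, and `+∞` is attainable iff
`2κ < −ε²`. -/
theorem stmt8 (κ θ ε : ℝ) (hθ : 0 < θ) (hε : 0 < ε) :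
    (Tendsto (fun x : ℝ => (2 / ε ^ 2) * ∫ u in (1:ℝ)..x,
        u ^ (2 * κ / ε ^ 2) * Real.exp ((4 * κ * θ / ε ^ 2) * (1 / u - 1)) *
          ∫ z in (1:ℝ)..u, z ^ (-(2 * κ / ε ^ 2) - 3) *
            Real.exp (-(4 * κ * θ / ε ^ 2) * (1 / z - 1)))
        (nhdsWithin 0 (Set.Ioi 0)) atTop) ∧
    ((∃ L : ℝ, Tendsto (fun x : ℝ => (2 / ε ^ 2) * ∫ u in (1:ℝ)..x,
        u ^ (2 * κ / ε ^ 2) * Real.exp ((4 * κ * θ / ε ^ 2) * (1 / u - 1)) *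
          ∫ z in (1:ℝ)..u, z ^ (-(2 * κ / ε ^ 2) - 3) *
            Real.exp (-(4 * κ * θ / ε ^ 2) * (1 / z - 1))) atTop (nhds L))
      ↔ 2 * κ < -ε ^ 2) := by
  have hε2 : (0:ℝ) < ε ^ 2 := by positivity
  have hpos : (0:ℝ) < 2 / ε ^ 2 := by positivity
  set a : ℝ := 2 * κ / ε ^ 2 with hadef
  set bb : ℝ := 4 * κ * θ / ε ^ 2 with hbdef
  have hfun : (fun x : ℝ => (2 / ε ^ 2) * ∫ u in (1:ℝ)..x,
        u ^ a * Real.exp (bb * (1 / u - 1)) *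
          ∫ z in (1:ℝ)..u, z ^ (-a - 3) * Real.exp (-bb * (1 / z - 1)))
      = fun x : ℝ => (2 / ε ^ 2) * ∫ u in (1:ℝ)..x, Stmt8Aux.F a bb u := rfl
  rw [hfun]
  constructor
  · exact (Stmt8Aux.tendsto_zero a bb).const_mul_atTop hpos
  · constructor
    · rintro ⟨L, hL⟩
      by_contra hcon
      push_neg at hcon
      have ha1 : -1 ≤ a := by
        rw [hadef, le_div_iff₀ hε2]; linarith
      have hdiv := (Stmt8Aux.tendsto_div (b := bb) ha1).const_mul_atTop hpos
      exact not_tendsto_nhds_of_tendsto_atTop hdiv L hL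
    · intro h
      have ha1 : a < -1 := by
        rw [hadef, div_lt_iff₀ hε2]; linarith
      obtain ⟨L, hL⟩ := Stmt8Aux.tendsto_fin (b := bb) ha1
      exact ⟨(2 / ε ^ 2) * L, hL.const_mul _⟩
end

section
/- For complex ω with Im(ω) < 0 and K > 0, ∫_ℝ e^{iωx}(K − e^x)⁺ dx = K^{1+iω}/(iω − ω²). -/
open MeasureTheory Complex

open Set Filter intervalIntegral in
private lemma cexp_integrableOn_Iic (c : ℂ) (hc : 0 < c.re) (b : ℝ) :
    IntegrableOn (fun x : ℝ => Complex.exp (c * x)) (Set.Iic b) := by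
  have hcont : Continuous fun x : ℝ => Complex.exp (c * x) :=
    Complex.continuous_exp.comp (continuous_const.mul Complex.continuous_ofReal)
  have hnorm : ∀ x : ℝ, ‖Complex.exp (c * x)‖ = Real.exp (c.re * x) := by
    intro x
    rw [Complex.norm_exp]
    congr 1
    simp [Complex.mul_re]
  refine integrableOn_Iic_of_intervalIntegral_norm_bounded (Real.exp (c.re * b) / c.re) b
    (fun y => (hcont.intervalIntegrable y b).1) tendsto_id ?_
  filter_upwards with y
  simp only [hnorm]
  have : (∫ x in (y : ℝ)..b, Real.exp (c.re * x)) =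
      (Real.exp (c.re * b) - Real.exp (c.re * y)) / c.re := by
    rw [intervalIntegral.integral_comp_mul_left (fun x => Real.exp x) hc.ne',
      integral_exp, smul_eq_mul]
    field_simp
  rw [this]
  have := Real.exp_pos (c.re * y)
  rw [div_le_div_iff_of_pos_right hc]
  linarith

open Set Filter intervalIntegral in
private lemma cexp_integral_Iic (c : ℂ) (hc : 0 < c.re) (b : ℝ) :
    (∫ x : ℝ in Set.Iic b, Complex.exp (c * x)) = Complex.exp (c * b) / c := by
  have hcne : c ≠ 0 := by
    intro h; rw [h] at hc; simp at hc
  have D : ∀ x : ℝ, HasDerivAt (fun y : ℝ => Complex.exp (c * y) / c)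
      (Complex.exp (c * x)) x := by
    intro x
    conv => congr
    rw [← mul_div_cancel_right₀ (Complex.exp (c * x)) hcne]
    apply ((Complex.hasDerivAt_exp _).comp x _).div_const c
    have h := ((hasDerivAt_id (x : ℂ)).const_mul c).comp_ofReal
    simp only [mul_one, id_eq] at h
    exact h
  have htend : Tendsto (fun y : ℝ => Complex.exp (c * y) / c) atBot (nhds 0) := by
    rw [tendsto_zero_iff_norm_tendsto_zero]
    have hn : ∀ y : ℝ, ‖Complex.exp (c * y) / c‖ = Real.exp (c.re * y) / ‖c‖ := by
      intro y
      rw [norm_div, Complex.norm_exp]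
      congr 2
      simp [Complex.mul_re]
    simp only [hn]
    have : Tendsto (fun y : ℝ => Real.exp (c.re * y)) atBot (nhds 0) :=
      Real.tendsto_exp_atBot.comp (Filter.Tendsto.const_mul_atBot hc tendsto_id)
    simpa using this.div_const ‖c‖
  have := integral_Iic_of_hasDerivAt_of_tendsto' (f := fun y : ℝ => Complex.exp (c * y) / c)
    (fun x _ => D x) (cexp_integrableOn_Iic c hc b) htend
  rw [this, sub_zero]

/-- Fourier transform in log-price of the put payoff. -/
theorem stmt14 (K : ℝ) (hK : 0 < K) (ω : ℂ) (hω : ω.im < 0) :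
    (∫ x : ℝ, Complex.exp (I * ω * x) * ((max (K - Real.exp x) 0 : ℝ) : ℂ)) =
      (K : ℂ) ^ (1 + I * ω) / (I * ω - ω ^ 2) := by
  set c₁ : ℂ := I * ω with hc₁
  set c₂ : ℂ := 1 + I * ω with hc₂
  have hre₁ : 0 < c₁.re := by
    simp only [hc₁, Complex.mul_re, Complex.I_re, Complex.I_im]
    linarith
  have hre₂ : 0 < c₂.re := by
    simp only [hc₂, Complex.add_re, Complex.one_re, Complex.mul_re, Complex.I_re, Complex.I_im]
    linarith
  have hne₁ : c₁ ≠ 0 := fun h => by rw [h] at hre₁; simp at hre₁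
  have hne₂ : c₂ ≠ 0 := fun h => by rw [h] at hre₂; simp at hre₂
  have hKne : (K : ℂ) ≠ 0 := by exact_mod_cast hK.ne'
  set L : ℝ := Real.log K with hL
  -- restrict to Iic L
  have hzero : ∀ x : ℝ, x ∉ Set.Iic L →
      Complex.exp (I * ω * x) * ((max (K - Real.exp x) 0 : ℝ) : ℂ) = 0 := by
    intro x hx
    have hx' : L < x := not_le.mp hx
    have : K ≤ Real.exp x := by
      rw [hL] at hx'
      calc K = Real.exp (Real.log K) := (Real.exp_log hK).symm
        _ ≤ Real.exp x := Real.exp_le_exp.mpr hx'.le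
    rw [max_eq_right (by linarith)]
    simp
  rw [← setIntegral_eq_integral_of_forall_compl_eq_zero hzero]
  rw [show (∫ x : ℝ in Set.Iic L, Complex.exp (I * ω * x) * ((max (K - Real.exp x) 0 : ℝ) : ℂ))
      = ∫ x : ℝ in Set.Iic L, ((K : ℂ) * Complex.exp (c₁ * x) - Complex.exp (c₂ * x)) from
    setIntegral_congr_fun measurableSet_Iic (fun x hx => ?_)]
  · rw [integral_sub (((cexp_integrableOn_Iic c₁ hre₁ L).const_mul _))
      (cexp_integrableOn_Iic c₂ hre₂ L), integral_const_mul _ _,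
      cexp_integral_Iic c₁ hre₁ L, cexp_integral_Iic c₂ hre₂ L]
    have hexpL : Complex.exp ((L : ℂ)) = (K : ℂ) := by
      rw [← Complex.ofReal_exp, hL, Real.exp_log hK]
    have h2 : (K : ℂ) ^ c₂ = Complex.exp (c₂ * L) := by
      rw [Complex.cpow_def_of_ne_zero hKne, ← Complex.ofReal_log hK.le, ← hL, mul_comm]
    have h1 : (K : ℂ) * Complex.exp (c₁ * L) = Complex.exp (c₂ * L) := by
      rw [hc₂, add_mul, one_mul, Complex.exp_add, hexpL, ← hc₁]
    have hprod : c₁ - ω ^ 2 = c₁ * c₂ := by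
      rw [hc₁, hc₂]
      have : I ^ 2 = -1 := Complex.I_sq
      ring_nf
      rw [this]; ring
    rw [← mul_div_assoc, h1, h2, hprod]
    rw [div_sub_div _ _ hne₁ hne₂, div_eq_div_iff (by exact mul_ne_zero hne₁ hne₂)
      (by exact mul_ne_zero hne₁ hne₂)]
    ring
  · -- pointwise identity on Iic L
    have hx' : Real.exp x ≤ K := by
      calc Real.exp x ≤ Real.exp L := Real.exp_le_exp.mpr hx
        _ = K := Real.exp_log hK
    rw [max_eq_left (by linarith)]
    have hexp : Complex.exp (c₂ * x) = Complex.exp (c₁ * x) * Real.exp x := by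
      rw [hc₂, add_mul, one_mul, Complex.exp_add, ← Complex.ofReal_exp, ← hc₁, mul_comm]
    rw [hexp, ← hc₁]
    push_cast
    ring
end
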